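/- arXiv:1309.3898 — 2 statements merged into one kernel-verified Lean document; each statement's English description precedes it below -/
import Mathlib

section
/- Let f: Ω → ℝ be C¹ on an open set Ω ⊆ ℝ^d, and suppose there is an integral curve of the gradient flow γ' = -∇f(γ) joining x to y (i.e., γ(0) = x, γ(T) = y for some T > 0, γ([0,T]) ⊆ Ω). Then the Agmon pseudo-distance satisfies d_Ag(x,y) = |f(x) - f(y)| = f(x) - f(y). -/
open Set intervalIntegral MeasureTheory

/-- The Agmon pseudo-distance associated to the degenerate metric `|∇f|² g` on `Ω`:
the infimum of `∫₀¹ ‖∇f(γ t)‖ ‖γ' t‖ dt` over `C¹` paths `γ` in `Ω` joining `x` to `y`. -/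
noncomputable def agmonDist {d : ℕ} (f : EuclideanSpace ℝ (Fin d) → ℝ)
    (Ω : Set (EuclideanSpace ℝ (Fin d))) (x y : EuclideanSpace ℝ (Fin d)) : ℝ :=
  sInf {L : ℝ | ∃ γ : ℝ → EuclideanSpace ℝ (Fin d),
    ContDiffOn ℝ 1 γ (Set.Icc 0 1) ∧ (∀ t ∈ Set.Icc (0 : ℝ) 1, γ t ∈ Ω) ∧
    γ 0 = x ∧ γ 1 = y ∧
    L = ∫ t in (0 : ℝ)..1, ‖gradient f (γ t)‖ * ‖deriv γ t‖}

section aux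

variable {d : ℕ} {f : EuclideanSpace ℝ (Fin d) → ℝ} {Ω : Set (EuclideanSpace ℝ (Fin d))}

local notation "E" => EuclideanSpace ℝ (Fin d)

lemma gradient_continuousOn (hΩ : IsOpen Ω) (hf : ContDiffOn ℝ 1 f Ω) :
    ContinuousOn (gradient f) Ω := by
  have h := hf.continuousOn_fderiv_of_isOpen hΩ le_rfl
  have : gradient f = fun z => (InnerProductSpace.toDual ℝ E).symm (fderiv ℝ f z) := rfl
  rw [this]
  exact (InnerProductSpace.toDual ℝ E).symm.continuous.comp_continuousOn h

/-- Lower bound: any admissible path has length at least `|f x - f y|`, in the form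
`f (η 0) - f (η 1) ≤ L` and `f (η 1) - f (η 0) ≤ L`. -/
lemma path_lower_bound (hΩ : IsOpen Ω) (hf : ContDiffOn ℝ 1 f Ω)
    (η : ℝ → E) (hη : ContDiffOn ℝ 1 η (Set.Icc 0 1))
    (hmem : ∀ t ∈ Set.Icc (0 : ℝ) 1, η t ∈ Ω) :
    |f (η 1) - f (η 0)| ≤ ∫ t in (0:ℝ)..1, ‖gradient f (η t)‖ * ‖deriv η t‖ := by
  have hu : UniqueDiffOn ℝ (Set.Icc (0:ℝ) 1) := uniqueDiffOn_Icc one_pos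
  set g : ℝ → E := derivWithin η (Set.Icc 0 1) with hg
  have hgcont : ContinuousOn g (Set.Icc 0 1) :=
    hη.continuousOn_derivWithin hu le_rfl
  have hηcont : ContinuousOn η (Set.Icc 0 1) := hη.continuousOn
  have hgradcont : ContinuousOn (fun t => gradient f (η t)) (Set.Icc 0 1) :=
    (gradient_continuousOn hΩ hf).comp hηcont hmem
  -- on the open interior, deriv = derivWithin
  have hIoo : ∀ t ∈ Set.Ioo (0:ℝ) 1, deriv η t = g t := by
    intro t ht
    rw [hg, derivWithin_of_mem_nhds (Icc_mem_nhds ht.1 ht.2)]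
  have hηdiff : ∀ t ∈ Set.Ioo (0:ℝ) 1, HasDerivAt η (g t) t := by
    intro t ht
    have h1 : DifferentiableAt ℝ η t :=
      ((hη.differentiableOn one_ne_zero) t (Set.mem_Icc_of_Ioo ht)).differentiableAt
        (Icc_mem_nhds ht.1 ht.2)
    rw [← hIoo t ht]
    exact h1.hasDerivAt
  -- chain rule
  have hchain : ∀ t ∈ Set.Ioo (0:ℝ) 1,
      HasDerivAt (fun s => f (η s)) (inner ℝ (gradient f (η t)) (g t) : ℝ) t := by
    intro t ht
    have hfd : DifferentiableAt ℝ f (η t) :=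
      (hf.differentiableOn one_ne_zero (η t) (hmem t (Set.mem_Icc_of_Ioo ht))).differentiableAt
        (hΩ.mem_nhds (hmem t (Set.mem_Icc_of_Ioo ht)))
    have h1 : HasFDerivAt f (InnerProductSpace.toDual ℝ E (gradient f (η t))) (η t) :=
      hfd.hasGradientAt.hasFDerivAt
    have := h1.comp_hasDerivAt t (hηdiff t ht)
    rw [InnerProductSpace.toDual_apply_apply] at this
    exact this
  set G : ℝ → ℝ := fun t => (inner ℝ (gradient f (η t)) (g t) : ℝ) with hGdef
  have hGcont : ContinuousOn G (Set.Icc 0 1) :=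
    hgradcont.inner hgcont
  have hGint : IntervalIntegrable G volume 0 1 :=
    (hGcont.mono (by rw [Set.uIcc_of_le (by norm_num : (0:ℝ) ≤ 1)])).intervalIntegrable
  have hfcomp : ContinuousOn (fun s => f (η s)) (Set.Icc 0 1) :=
    (hf.continuousOn).comp hηcont hmem
  have hFTC : ∫ t in (0:ℝ)..1, G t = f (η 1) - f (η 0) :=
    integral_eq_sub_of_hasDeriv_right_of_le (by norm_num) hfcomp
      (fun t ht => (hchain t ht).hasDerivWithinAt) hGint
  -- the continuous version of the length integrand
  have hHcont : ContinuousOn (fun t => ‖gradient f (η t)‖ * ‖g t‖) (Set.Icc 0 1) :=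
    (hgradcont.norm).mul (hgcont.norm)
  have hHint : IntervalIntegrable (fun t => ‖gradient f (η t)‖ * ‖g t‖) volume 0 1 :=
    (hHcont.mono (by rw [Set.uIcc_of_le (by norm_num : (0:ℝ) ≤ 1)])).intervalIntegrable
  have hcongr : ∫ t in (0:ℝ)..1, ‖gradient f (η t)‖ * ‖deriv η t‖
      = ∫ t in (0:ℝ)..1, ‖gradient f (η t)‖ * ‖g t‖ := by
    apply intervalIntegral.integral_congr_ae
    have h1 : ∀ᵐ t : ℝ ∂volume, t ≠ 1 := by
      have : (volume : Measure ℝ) {(1:ℝ)} = 0 := measure_singleton 1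
      exact ae_iff.mpr (by simpa using this)
    filter_upwards [h1] with t ht1 ht
    rw [Set.uIoc_of_le (by norm_num : (0:ℝ) ≤ 1)] at ht
    have htIoo : t ∈ Set.Ioo (0:ℝ) 1 := ⟨ht.1, lt_of_le_of_ne ht.2 ht1⟩
    rw [hIoo t htIoo]
  rw [hcongr, ← hFTC]
  calc |∫ t in (0:ℝ)..1, G t| ≤ ∫ t in (0:ℝ)..1, |G t| :=
        intervalIntegral.abs_integral_le_integral_abs (by norm_num)
    _ ≤ ∫ t in (0:ℝ)..1, ‖gradient f (η t)‖ * ‖g t‖ := by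
        apply intervalIntegral.integral_mono_on (by norm_num) hGint.abs hHint
        intro t ht
        exact abs_real_inner_le_norm _ _

end aux

/-- If there is an integral curve of `γ' = -∇f(γ)` joining `x` to `y` inside the open set `Ω`
(on which `f` is `C¹`), then `d_Ag(x,y) = |f x - f y| = f x - f y`. -/
theorem agmonDist_eq_of_gradient_curve {d : ℕ} (f : EuclideanSpace ℝ (Fin d) → ℝ)
    (Ω : Set (EuclideanSpace ℝ (Fin d))) (hΩ : IsOpen Ω) (hf : ContDiffOn ℝ 1 f Ω)
    (x y : EuclideanSpace ℝ (Fin d)) (hx : x ∈ Ω) (hy : y ∈ Ω)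
    (γ : ℝ → EuclideanSpace ℝ (Fin d)) (T : ℝ) (hT : 0 < T)
    (hmem : ∀ t ∈ Set.Icc (0 : ℝ) T, γ t ∈ Ω)
    (hode : ∀ t ∈ Set.Icc (0 : ℝ) T, HasDerivAt γ (-(gradient f (γ t))) t)
    (h0 : γ 0 = x) (hTy : γ T = y) :
    agmonDist f Ω x y = |f x - f y| ∧ |f x - f y| = f x - f y := by
  classical
  -- the reparametrized curve
  set δ : ℝ → EuclideanSpace ℝ (Fin d) := fun s => γ (T * s) with hδdef
  have hmap : ∀ s ∈ Set.Icc (0:ℝ) 1, T * s ∈ Set.Icc (0:ℝ) T := by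
    intro s hs
    constructor
    · exact mul_nonneg hT.le hs.1
    · calc T * s ≤ T * 1 := by nlinarith [hs.2]
        _ = T := mul_one T
  have hδmem : ∀ s ∈ Set.Icc (0:ℝ) 1, δ s ∈ Ω := fun s hs => hmem _ (hmap s hs)
  have hδderiv : ∀ s ∈ Set.Icc (0:ℝ) 1,
      HasDerivAt δ (T • (-(gradient f (δ s)))) s := by
    intro s hs
    have h1 : HasDerivAt (fun u : ℝ => T * u) T s := by
      simpa using (hasDerivAt_id s).const_mul T
    exact (hode (T * s) (hmap s hs)).scomp s h1
  have hδcont : ContinuousOn δ (Set.Icc 0 1) :=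
    fun s hs => ((hδderiv s hs).continuousAt).continuousWithinAt
  have hgradδcont : ContinuousOn (fun s => gradient f (δ s)) (Set.Icc 0 1) :=
    (gradient_continuousOn hΩ hf).comp hδcont hδmem
  have hu : UniqueDiffOn ℝ (Set.Icc (0:ℝ) 1) := uniqueDiffOn_Icc one_pos
  -- δ is C¹ on [0,1]
  have hδC1 : ContDiffOn ℝ 1 δ (Set.Icc 0 1) := by
    have hdw : ∀ s ∈ Set.Icc (0:ℝ) 1,
        derivWithin δ (Set.Icc 0 1) s = T • (-(gradient f (δ s))) := by
      intro s hs
      exact ((hδderiv s hs).hasDerivWithinAt).derivWithin (hu s hs)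
    have key : ContDiffOn ℝ (0 + 1) δ (Set.Icc 0 1) := by
      rw [contDiffOn_succ_iff_derivWithin hu]
      refine ⟨fun s hs => ((hδderiv s hs).differentiableAt).differentiableWithinAt,
        by simp, ?_⟩
      rw [contDiffOn_zero]
      apply ContinuousOn.congr (f := fun s => T • (-(gradient f (δ s))))
      · exact (hgradδcont.neg).const_smul T
      · exact hdw
    simpa using key
  -- the value of the length integral of δ
  have hderivδ : ∀ s ∈ Set.Icc (0:ℝ) 1, deriv δ s = T • (-(gradient f (δ s))) :=
    fun s hs => (hδderiv s hs).deriv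
  -- the integrand along δ
  have hInt : ∀ s ∈ Set.Icc (0:ℝ) 1,
      ‖gradient f (δ s)‖ * ‖deriv δ s‖ = T * ‖gradient f (δ s)‖ ^ 2 := by
    intro s hs
    rw [hderivδ s hs, norm_smul, norm_neg, Real.norm_eq_abs, abs_of_pos hT]
    ring
  -- chain rule along δ : (f ∘ δ)' = -(T * ‖∇f(δ s)‖²)
  have hchainδ : ∀ s ∈ Set.Icc (0:ℝ) 1,
      HasDerivAt (fun u => f (δ u)) (-(T * ‖gradient f (δ s)‖ ^ 2)) s := by
    intro s hs
    have hfd : DifferentiableAt ℝ f (δ s) :=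
      (hf.differentiableOn one_ne_zero (δ s) (hδmem s hs)).differentiableAt
        (hΩ.mem_nhds (hδmem s hs))
    have h1 : HasFDerivAt f
        (InnerProductSpace.toDual ℝ (EuclideanSpace ℝ (Fin d)) (gradient f (δ s))) (δ s) :=
      hfd.hasGradientAt.hasFDerivAt
    have h2 := h1.comp_hasDerivAt s (hδderiv s hs)
    have h3 : (InnerProductSpace.toDual ℝ (EuclideanSpace ℝ (Fin d)) (gradient f (δ s)))
        (T • (-(gradient f (δ s))))
        = -(T * ‖gradient f (δ s)‖ ^ 2) := by
      rw [InnerProductSpace.toDual_apply_apply]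
      rw [inner_smul_right, inner_neg_right, real_inner_self_eq_norm_sq]
      ring
    rw [h3] at h2
    exact h2
  have hsqcont : ContinuousOn (fun s => T * ‖gradient f (δ s)‖ ^ 2) (Set.Icc 0 1) :=
    ((hgradδcont.norm.pow 2).const_smul T)
  have hsqint : IntervalIntegrable (fun s => T * ‖gradient f (δ s)‖ ^ 2) volume 0 1 :=
    (hsqcont.mono (by rw [Set.uIcc_of_le (by norm_num : (0:ℝ) ≤ 1)])).intervalIntegrable
  -- FTC along δ
  have hFTCδ : ∫ s in (0:ℝ)..1, -(T * ‖gradient f (δ s)‖ ^ 2) = f (δ 1) - f (δ 0) := by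
    refine intervalIntegral.integral_eq_sub_of_hasDerivAt
      (f := fun u => f (δ u)) (f' := fun s => -(T * ‖gradient f (δ s)‖ ^ 2)) ?_ hsqint.neg
    intro s hs
    rw [Set.uIcc_of_le (by norm_num : (0:ℝ) ≤ 1)] at hs
    exact hchainδ s hs
  have hδ0 : δ 0 = x := by simp [hδdef, h0]
  have hδ1 : δ 1 = y := by simp [hδdef, hTy]
  have hval : ∫ s in (0:ℝ)..1, ‖gradient f (δ s)‖ * ‖deriv δ s‖ = f x - f y := by
    rw [intervalIntegral.integral_congr (g := fun s => T * ‖gradient f (δ s)‖ ^ 2)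
      (by intro s hs; rw [Set.uIcc_of_le (by norm_num : (0:ℝ) ≤ 1)] at hs; exact hInt s hs)]
    have := hFTCδ
    rw [intervalIntegral.integral_neg] at this
    rw [hδ0, hδ1] at this
    linarith
  -- nonnegativity of f x - f y
  have hnonneg : 0 ≤ f x - f y := by
    rw [← hval]
    apply intervalIntegral.integral_nonneg (by norm_num)
    intro s hs
    rw [hInt s hs]
    positivity
  have habs : |f x - f y| = f x - f y := abs_of_nonneg hnonneg
  refine ⟨?_, habs⟩
  -- the set defining agmonDist
  set S := {L : ℝ | ∃ η : ℝ → EuclideanSpace ℝ (Fin d),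
    ContDiffOn ℝ 1 η (Set.Icc 0 1) ∧ (∀ t ∈ Set.Icc (0 : ℝ) 1, η t ∈ Ω) ∧
    η 0 = x ∧ η 1 = y ∧
    L = ∫ t in (0 : ℝ)..1, ‖gradient f (η t)‖ * ‖deriv η t‖} with hS
  have hmemS : (f x - f y) ∈ S :=
    ⟨δ, hδC1, hδmem, hδ0, hδ1, hval.symm⟩
  have hlb : ∀ L ∈ S, f x - f y ≤ L := by
    rintro L ⟨η, hη, hηmem, hη0, hη1, rfl⟩
    have := path_lower_bound hΩ hf η hη hηmem
    rw [hη0, hη1] at this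
    calc f x - f y ≤ |f y - f x| := by
          rw [abs_sub_comm]; exact le_abs_self _
      _ ≤ _ := this
  rw [habs]
  exact le_antisymm (csInf_le ⟨f x - f y, hlb⟩ hmemS) (le_csInf ⟨_, hmemS⟩ hlb)
end

section
/- Let f: ℝ^d → ℝ be C¹, Ω₊ ⊆ ℝ^d a bounded open set, and Ω₋ an open set with closure contained in Ω₊. Assume ∇f ≠ 0 on Ω̄₊ \ Ω₋ and that every forward gradient trajectory γ' = -∇f(γ) starting in Ω₊ that remains in Ω₊ for all time eventually enters Ω₋. Then every x ∈ Ω̄₊ \ Ω₋ with f(x) < min_{∂Ω₊} f satisfies f(x) ≥ min_{∂Ω₋} f. -/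
/-- Under Hypothesis 1 of the paper: `Ω₊` bounded open, `Ω₋` open with `Ω̄₋ ⊆ Ω₊`,
`∇f ≠ 0` on `Ω̄₊ \ Ω₋`, and every forward gradient trajectory starting in `Ω₊` and
remaining in `Ω₊` eventually enters `Ω₋`. Then every `x ∈ Ω̄₊ \ Ω₋` with
`f x < min_{∂Ω₊} f` satisfies `min_{∂Ω₋} f ≤ f x`. -/
theorem flow_lower_bound {d : ℕ} (f : EuclideanSpace ℝ (Fin d) → ℝ)
    (hf : ContDiff ℝ 1 f)
    (Ωp Ωm : Set (EuclideanSpace ℝ (Fin d)))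
    (hΩp : IsOpen Ωp) (hΩpbdd : Bornology.IsBounded Ωp) (hΩm : IsOpen Ωm)
    (hsub : closure Ωm ⊆ Ωp)
    (hgrad : ∀ x ∈ closure Ωp \ Ωm, gradient f x ≠ 0)
    (htraj : ∀ γ : ℝ → EuclideanSpace ℝ (Fin d),
      (∀ t ≥ (0 : ℝ), HasDerivAt γ (-(gradient f (γ t))) t) →
      γ 0 ∈ Ωp → (∀ t ≥ (0 : ℝ), γ t ∈ Ωp) → ∃ t ≥ (0 : ℝ), γ t ∈ Ωm) :
    ∀ x ∈ closure Ωp \ Ωm, f x < sInf (f '' frontier Ωp) →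
      sInf (f '' frontier Ωm) ≤ f x := by
  intro x hx hlt
  obtain ⟨hxp, hxm⟩ := hx
  have hfc : Continuous f := hf.continuous
  -- compactness facts
  have hKp : IsCompact (closure Ωp) := hΩpbdd.isCompact_closure
  have hKm : IsCompact (closure Ωm) := by
    simpa [closure_closure] using (hΩpbdd.subset hsub).isCompact_closure
  have hFm : IsCompact (frontier Ωm) :=
    hKm.of_isClosed_subset isClosed_frontier frontier_subset_closure
  have hFp : IsCompact (frontier Ωp) :=
    hKp.of_isClosed_subset isClosed_frontier frontier_subset_closure
  have hbddm : BddBelow (f '' frontier Ωm) := (hFm.image hfc).bddBelow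
  have hbddp : BddBelow (f '' frontier Ωp) := (hFp.image hfc).bddBelow
  by_cases hxcl : x ∈ closure Ωm
  · -- x is on the frontier of Ωm
    have : x ∈ frontier Ωm := by
      rw [frontier, hΩm.interior_eq]; exact ⟨hxcl, hxm⟩
    exact csInf_le hbddm ⟨x, this, rfl⟩
  -- main case : x ∉ closure Ωm; argue by contradiction
  by_contra hcon
  push_neg at hcon
  -- the sublevel set
  set S : Set (EuclideanSpace ℝ (Fin d)) := closure Ωp ∩ f ⁻¹' Set.Iic (f x) with hS
  have hSclosed : IsClosed S := isClosed_closure.inter (isClosed_Iic.preimage hfc)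
  have hScompact : IsCompact S := hKp.of_isClosed_subset hSclosed Set.inter_subset_left
  have hxS : x ∈ S := ⟨hxp, by simp [Set.mem_preimage]⟩
  have hSfp : ∀ z ∈ S, z ∉ frontier Ωp := by
    intro z hz hzf
    have h1 : sInf (f '' frontier Ωp) ≤ f z := csInf_le hbddp ⟨z, hzf, rfl⟩
    have h2 : f z ≤ f x := hz.2
    linarith
  have hSfm : ∀ z ∈ S, z ∉ frontier Ωm := by
    intro z hz hzf
    have h1 : sInf (f '' frontier Ωm) ≤ f z := csInf_le hbddm ⟨z, hzf, rfl⟩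
    have h2 : f z ≤ f x := hz.2
    linarith
  have hSp : S ⊆ Ωp := by
    intro z hz
    rcases (Classical.em (z ∈ interior Ωp)) with h | h
    · rwa [hΩp.interior_eq] at h
    · exact absurd ⟨hz.1, h⟩ (hSfp z hz)
  -- the connected component of x in S
  set C : Set (EuclideanSpace ℝ (Fin d)) := connectedComponentIn S x with hC
  have hxC : x ∈ C := mem_connectedComponentIn hxS
  have hCS : C ⊆ S := connectedComponentIn_subset S x
  have hCpre : IsPreconnected C := isPreconnected_connectedComponentIn
  have hCclosed : IsClosed C := by
    refine isClosed_of_closure_subset ?_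
    exact hCpre.closure.subset_connectedComponentIn (subset_closure hxC)
      ((IsClosed.closure_subset_iff hSclosed).2 hCS)
  have hCcompact : IsCompact C := hScompact.of_isClosed_subset hCclosed hCS
  -- C avoids closure Ωm
  have hCm : C ⊆ (closure Ωm)ᶜ := by
    refine hCpre.subset_left_of_subset_union isClosed_closure.isOpen_compl hΩm
      (disjoint_compl_left.mono_right subset_closure) ?_ ⟨x, hxC, hxcl⟩
    intro z hz
    rcases Classical.em (z ∈ closure Ωm) with h | h
    · right
      rcases Classical.em (z ∈ Ωm) with h2 | h2
      · exact h2
      · exact absurd (by rw [frontier, hΩm.interior_eq]; exact ⟨h, h2⟩)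
          (hSfm z (hCS hz))
    · left; exact h
  -- f attains a minimum on C at some z
  obtain ⟨z, hzC, hzmin⟩ := hCcompact.exists_isMinOn ⟨x, hxC⟩ hfc.continuousOn
  have hzS : z ∈ S := hCS hzC
  have hzp : z ∈ Ωp := hSp hzS
  have hznm : z ∉ Ωm := fun h => (hCm hzC) (subset_closure h)
  set g : EuclideanSpace ℝ (Fin d) := gradient f z with hg
  have hgne : g ≠ 0 := hgrad z ⟨hzS.1, hznm⟩
  -- the function s ↦ f (z - s • g) has negative derivative at 0
  have hdiff : DifferentiableAt ℝ f z := (hf.differentiable one_ne_zero) z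
  have hGrad : HasGradientAt f g z := hdiff.hasGradientAt
  have hpath : HasDerivAt (fun s : ℝ => z - s • g) (-g) 0 := by
    simpa using ((hasDerivAt_id (0:ℝ)).smul_const g).const_sub z
  have hφ : HasDerivAt (fun s : ℝ => f (z - s • g)) (-(‖g‖^2)) 0 := by
    have h1 : HasFDerivAt f (InnerProductSpace.toDual ℝ _ g) z :=
      hasGradientAt_iff_hasFDerivAt.1 hGrad
    have h1' : HasFDerivAt f (InnerProductSpace.toDual ℝ _ g) (z - (0:ℝ) • g) := by
      simpa using h1
    have h2 : HasDerivAt (fun s : ℝ => f (z - s • g))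
        ((InnerProductSpace.toDual ℝ _ g) (-g)) 0 := h1'.comp_hasDerivAt 0 hpath
    have h3 : (InnerProductSpace.toDual ℝ _ g) (-g) = -(‖g‖^2) := by
      rw [InnerProductSpace.toDual_apply_apply, inner_neg_right, real_inner_self_eq_norm_sq]
    rwa [h3] at h2
  -- slope is eventually negative to the right of 0
  have hslope : Filter.Tendsto (slope (fun s : ℝ => f (z - s • g)) 0)
      (nhdsWithin 0 {(0:ℝ)}ᶜ) (nhds (-(‖g‖^2))) :=
    hasDerivAt_iff_tendsto_slope.1 hφ
  have hneg : (-(‖g‖^2) : ℝ) < 0 := by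
    have hg0 : (0:ℝ) < ‖g‖ := norm_pos_iff.2 hgne
    have : (0:ℝ) < ‖g‖^2 := by positivity
    linarith
  have hev1 : ∀ᶠ s in nhdsWithin (0:ℝ) (Set.Ioi 0),
      slope (fun s : ℝ => f (z - s • g)) 0 s < 0 := by
    have := hslope.eventually (gt_mem_nhds hneg)
    exact this.filter_mono (nhdsWithin_mono _ (fun s hs => ne_of_gt hs))
  have hev2 : ∀ᶠ s in nhdsWithin (0:ℝ) (Set.Ioi 0), z - s • g ∈ Ωp := by
    have hc : ContinuousAt (fun s : ℝ => z - s • g) 0 :=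
      (continuous_const.sub (continuous_id.smul continuous_const)).continuousAt
    have : ∀ᶠ s in nhds (0:ℝ), z - s • g ∈ Ωp := by
      refine hc.preimage_mem_nhds ?_
      refine hΩp.mem_nhds ?_
      simpa using hzp
    exact this.filter_mono nhdsWithin_le_nhds
  obtain ⟨ε, hε, hIoc⟩ := mem_nhdsGT_iff_exists_Ioc_subset.1 (hev1.and hev2)
  have hεpos : (0:ℝ) < ε := hε
  -- the short segment of steepest descent
  set T : Set (EuclideanSpace ℝ (Fin d)) := (fun s : ℝ => z - s • g) '' Set.Icc 0 ε with hT
  have hTdecr : ∀ s ∈ Set.Ioc (0:ℝ) ε, f (z - s • g) < f z ∧ z - s • g ∈ Ωp := by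
    intro s hs
    have h := hIoc hs
    refine ⟨?_, h.2⟩
    have hsl := h.1
    rw [slope_def_field] at hsl
    have hspos : (0:ℝ) < s := hs.1
    have : (f (z - s • g) - f (z - (0:ℝ) • g)) / (s - 0) < 0 := by
      simpa [div_eq_inv_mul] using hsl
    rw [sub_zero, div_neg_iff] at this
    rcases this with ⟨_, h2⟩ | ⟨h1, _⟩
    · linarith
    · have : f (z - s • g) < f (z - (0:ℝ) • g) := by linarith
      simpa using this
  have hTS : T ⊆ S := by
    rintro _ ⟨s, hs, rfl⟩
    rcases eq_or_lt_of_le hs.1 with h | h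
    · show z - s • g ∈ S
      rw [← h]; simpa using hzS
    · obtain ⟨hlt', hmem⟩ := hTdecr s ⟨h, hs.2⟩
      exact ⟨subset_closure hmem, le_trans (le_of_lt hlt') hzS.2⟩
  have hTpre : IsPreconnected T :=
    (isPreconnected_Icc).image _
      (continuous_const.sub (continuous_id.smul continuous_const)).continuousOn
  have hzT : z ∈ T := ⟨0, ⟨le_rfl, le_of_lt hεpos⟩, by simp⟩
  have hTC : T ⊆ C := by
    have h1 : T ⊆ connectedComponentIn S z :=
      hTpre.subset_connectedComponentIn hzT hTS
    have h2 : connectedComponentIn S x = connectedComponentIn S z :=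
      connectedComponentIn_eq hzC
    rw [hC, h2]; exact h1
  -- contradiction with minimality of z
  have hyC : z - ε • g ∈ C := hTC ⟨ε, ⟨le_of_lt hεpos, le_rfl⟩, rfl⟩
  have hylt : f (z - ε • g) < f z := (hTdecr ε ⟨hεpos, le_rfl⟩).1
  exact absurd (hzmin hyC) (not_le.2 hylt)
end
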